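/- A finite set of flow constraints k is satisfiable (i.e., there exists a solution σ : Atoms → {S,T} such that every constraint of k holds after substituting σ, where Src is interpreted as T and Snk as S and the relation is the can-flow-to order S ⊑ T) if and only if there is no path in the constraint graph of k from Src to Snk. -/

import Mathlib

/-- Nodes of the constraint graph: the transient source `Src` (T), the stable
sink `Snk` (S), and the atoms. -/
inductive Node (A : Type) where
  | Src : Node A
  | Snk : Node A
  | atom : A → Node A

/-- `l` is a path from `u` to `v` in the constraint (edge) set `k`:
a finite nonempty sequence of nodes starting at `u`, ending at `v`, with each
consecutive pair an edge of `k`. -/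
def IsPathFrom {A : Type} (k : Set (Node A × Node A)) (u v : Node A)
    (l : List (Node A)) : Prop :=
  List.Chain' (fun x y => (x, y) ∈ k) l ∧ l.head? = some u ∧ l.getLast? = some v

/-- There is a path from `u` to `v` in `k`. -/
def Reaches {A : Type} (k : Set (Node A × Node A)) (u v : Node A) : Prop :=
  ∃ l, IsPathFrom k u v l

/-- Extend a solution (atoms to the two-point lattice, `false = S ⊑ true = T`)
to all nodes, interpreting `Src` as `T` and `Snk` as `S`. -/
def extSol {A : Type} (σ : A → Bool) : Node A → Bool
  | .Src => true
  | .Snk => false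
  | .atom a => σ a

/-- `σ` satisfies every constraint (edge) `u → v` of `k`: `σ(u) ⊑ σ(v)`. -/
def Satisfies {A : Type} (k : Set (Node A × Node A)) (σ : A → Bool) : Prop :=
  ∀ e ∈ k, extSol σ e.1 ≤ extSol σ e.2

/-- The set of atoms `As` cuts the path `l`: some atom of `As` occurs on `l`. -/
def CutsList {A : Type} (As : Set A) (l : List (Node A)) : Prop :=
  ∃ a ∈ As, Node.atom a ∈ l

/-- `As` is a cut-set for `k`: it cuts every `Src`-to-`Snk` path of `k`. -/
def IsCutSet {A : Type} (As : Set A) (k : Set (Node A × Node A)) : Prop :=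
  ∀ l, IsPathFrom k Node.Src Node.Snk l → CutsList As l

/-- The edge `e` is incident to an atom of `As`. -/
def Incident {A : Type} (As : Set A) (e : Node A × Node A) : Prop :=
  (∃ a ∈ As, e.1 = Node.atom a) ∨ (∃ a ∈ As, e.2 = Node.atom a)

-- The canonical assignment: `T` iff `Src` reaches the atom in `k`.
open Classical in
noncomputable def canonSol {A : Type} (k : Set (Node A × Node A)) : A → Bool :=
  fun a => if Reaches k Node.Src (Node.atom a) then true else false

lemma mono_along_path {A : Type} {k : Set (Node A × Node A)} {σ : A → Bool}
    (hσ : Satisfies k σ) :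
    ∀ (l : List (Node A)) (u v : Node A), List.Chain' (fun x y => (x, y) ∈ k) l →
      l.head? = some u → l.getLast? = some v → extSol σ u ≤ extSol σ v := by
  intro l
  induction l with
  | nil => intro u v _ h; simp at h
  | cons x t ih =>
    intro u v hc hh hl
    simp at hh; subst hh
    cases t with
    | nil => simp at hl; subst hl; exact le_refl _
    | cons y t' =>
      have hxy : (x, y) ∈ k := (List.isChain_cons_cons.mp hc).1
      have h1 := hσ _ hxy
      have h2 := ih y v (List.isChain_cons_cons.mp hc).2 rfl
        (by simpa using hl)
      exact le_trans h1 h2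

lemma reaches_step {A : Type} {k : Set (Node A × Node A)} {u v : Node A}
    (h : Reaches k Node.Src u) (he : (u, v) ∈ k) : Reaches k Node.Src v := by
  obtain ⟨l, hc, hh, hl⟩ := h
  refine ⟨l ++ [v], ?_, ?_, ?_⟩
  · apply List.isChain_append.mpr
    refine ⟨hc, List.isChain_singleton v, ?_⟩
    intro x hx y hy
    simp at hy; subst hy
    rw [hl] at hx; simp at hx; subst hx; exact he
  · cases l with
    | nil => simp at hh
    | cons a t => simpa using hh
  · simp

/-- A finite constraint set is satisfiable iff it has no `Src`-to-`Snk` path. -/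
theorem satisfiable_iff_no_src_snk_path {A : Type}
    (k : Set (Node A × Node A)) (hfin : k.Finite) :
    (∃ σ : A → Bool, Satisfies k σ) ↔ ¬ Reaches k Node.Src Node.Snk := by
  constructor
  · rintro ⟨σ, hσ⟩ ⟨l, hc, hh, hl⟩
    have := mono_along_path hσ l _ _ hc hh hl
    simp only [extSol] at this; exact absurd this (by simp)
  · intro hnp
    refine ⟨canonSol k, ?_⟩
    rintro ⟨u, v⟩ he
    by_cases hu : extSol (canonSol k) u = true
    swap
    · simp at hu; simp [hu]
    · -- u's value is true, show Src reaches u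
      have hru : Reaches k Node.Src u := by
        cases u with
        | Src => exact ⟨[Node.Src], List.isChain_singleton _, rfl, rfl⟩
        | Snk => simp [extSol] at hu
        | atom a =>
          simp [extSol, canonSol] at hu
          by_contra hcon
          simp [hcon] at hu
      have hrv : Reaches k Node.Src v := reaches_step hru he
      cases v with
      | Src => simp [extSol]
      | Snk => exact absurd hrv hnp
      | atom b => simp [extSol, canonSol, hrv, hu]
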